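/- Let n, k ≥ 0. For a partition μ with μ₁ ≤ k and i_{2n}(μ) < ∞, define the integer sequence s(μ) of length n+k by s(μ)_i = (n+k+1−i) − μ†_{k+1−i} for 1 ≤ i ≤ k and s(μ)_{k+j} = (n+1−j) + τ_{2n}(μ)_j for 1 ≤ j ≤ n. Then μ ↦ s(μ) is a bijection from the set of partitions μ with μ₁ ≤ k and i_{2n}(μ) < ∞ onto the set of integer sequences s of length n+k such that the absolute values |s_1|, …, |s_{n+k}| are a permutation of 1, …, n+k, s_1 > s_2 > ⋯ > s_k, and s_{k+1} > s_{k+2} > ⋯ > s_{n+k} > 0. -/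

import Mathlib

/-- A partition: a weakly decreasing sequence of nonnegative integers, indexed starting at 1
(`f 0 = 0` by convention), with finitely many nonzero terms. `f i` is the part `λ_i`. -/
structure Partition' where
  f : ℕ → ℕ
  f_zero : f 0 = 0
  antitone : ∀ ⦃i j : ℕ⦄, 1 ≤ i → i ≤ j → f j ≤ f i
  ev_zero : ∃ N, ∀ i, N ≤ i → f i = 0

namespace Partition'

/-- The number of nonzero parts `ℓ(λ)`. -/
noncomputable def len (p : Partition') : ℕ := sSup {i | p.f i ≠ 0}

/-- The size `|λ| = Σ_i λ_i`. -/
noncomputable def size (p : Partition') : ℕ := ∑ᶠ i, p.f i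

/-- The transpose (conjugate): `g† j = #{i ≥ 1 : g i ≥ j}`. -/
noncomputable def conjFun (g : ℕ → ℕ) (j : ℕ) : ℕ := Set.ncard {i | 1 ≤ i ∧ j ≤ g i}

/-- Containment of partitions: `ν ⊆ μ`. -/
def Sub (ν μ : Partition') : Prop := ∀ i, ν.f i ≤ μ.f i

/-- The cells (boxes) of the skew diagram `μ/ν`: pairs `(i,j)` with `i ≥ 1` and
`ν_i < j ≤ μ_i`. -/
def cells (μ ν : Partition') : Set (ℕ × ℕ) :=
  {c | 1 ≤ c.1 ∧ ν.f c.1 < c.2 ∧ c.2 ≤ μ.f c.1}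

/-- Two boxes share an edge. -/
def Adj (a b : ℕ × ℕ) : Prop :=
  (a.1 = b.1 ∧ (a.2 + 1 = b.2 ∨ b.2 + 1 = a.2)) ∨
  (a.2 = b.2 ∧ (a.1 + 1 = b.1 ∨ b.1 + 1 = a.1))

/-- A set of boxes is connected if any two of its boxes are joined by a chain of its
boxes, each sharing an edge with the next. -/
def IsConnected (s : Set (ℕ × ℕ)) : Prop :=
  ∀ a ∈ s, ∀ b ∈ s, Relation.ReflTransGen (fun x y => x ∈ s ∧ y ∈ s ∧ Adj x y) a b

/-- `μ/ν` is a border strip: `ν ⊆ μ`, and the skew diagram is nonempty, connected,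
and contains no 2×2 square. -/
def IsBorderStrip (μ ν : Partition') : Prop :=
  Sub ν μ ∧ (cells μ ν).Nonempty ∧ IsConnected (cells μ ν) ∧
    ¬ ∃ i j : ℕ, (i, j) ∈ cells μ ν ∧ (i + 1, j) ∈ cells μ ν ∧
      (i, j + 1) ∈ cells μ ν ∧ (i + 1, j + 1) ∈ cells μ ν

/-- The number of boxes of `μ/ν`. -/
noncomputable def stripSize (μ ν : Partition') : ℕ := (cells μ ν).ncard

/-- The number of rows that `μ/ν` occupies. -/
noncomputable def rows (μ ν : Partition') : ℕ := (Prod.fst '' cells μ ν).ncard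

/-- The number of columns that `μ/ν` occupies. -/
noncomputable def cols (μ ν : Partition') : ℕ := (Prod.snd '' cells μ ν).ncard

/-- The graph of the symplectic modification rule: `ModRule n μ i τ` holds iff
`i_{2n}(μ) = i < ∞` and `τ_{2n}(μ) = τ`. -/
inductive ModRule (n : ℕ) : Partition' → ℕ → Partition' → Prop
  | base (μ : Partition') (h : μ.len ≤ n) : ModRule n μ 0 μ
  | step (μ ν τ : Partition') (i : ℕ)
      (hlen : n < μ.len)
      (hbs : IsBorderStrip μ ν)
      (hsize : stripSize μ ν = 2 * (μ.len - n - 1))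
      (hbox : (μ.len, 1) ∈ cells μ ν)
      (hrec : ModRule n ν i τ) :
      ModRule n μ (cols μ ν + i) τ

/-- `i_{2n}(μ) ∈ ℕ∞`; it is `⊤ = ∞` exactly when the modification rule fails. -/
noncomputable def i2 (n : ℕ) (μ : Partition') : ℕ∞ :=
  sInf {c | ∃ i τ, ModRule n μ i τ ∧ c = (i : ℕ∞)}

-- `τ_{2n}(μ)`, defined (arbitrarily, as `μ` itself) when `i_{2n}(μ) = ∞`.
open Classical in
noncomputable def tau (n : ℕ) (μ : Partition') : Partition' :=
  if h : ∃ it : ℕ × Partition', ModRule n μ it.1 it.2 then h.choose.2 else μ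

end Partition'

namespace Partition'

/-- The sequence `s(μ)` associated with a partition `μ`: `s_p = (n+k+1-p) - μ†_{k+1-p}`
for `1 ≤ p ≤ k`, and `s_{k+j} = (n+1-j) + τ_{2n}(μ)_j` for `1 ≤ j ≤ n`;
`s_p = 0` outside `[1, n+k]`. -/
noncomputable def seqOf (n k : ℕ) (μ : Partition') : ℕ → ℤ := fun p =>
  if p = 0 then 0
  else if p ≤ k then ((n : ℤ) + k + 1 - p) - conjFun μ.f (k + 1 - p)
  else if p ≤ n + k then ((n : ℤ) + 1 - ((p : ℤ) - k)) + (tau n μ).f (p - k)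
  else 0

end Partition'

namespace Partition'

lemma ext' {p q : Partition'} (h : p.f = q.f) : p = q := by
  cases p; cases q; simp_all

lemma f_le_one (p : Partition') {i : ℕ} (hi : 1 ≤ i) : p.f i ≤ p.f 1 :=
  p.antitone le_rfl hi

lemma f_zero_of_lt_len_aux (p : Partition') : BddAbove {i | p.f i ≠ 0} := by
  obtain ⟨N, hN⟩ := p.ev_zero
  exact ⟨N, fun i hi => by by_contra h; exact hi (hN i (le_of_not_ge h))⟩

lemma f_eq_zero_of_len_lt (p : Partition') {i : ℕ} (h : p.len < i) : p.f i = 0 := by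
  by_contra hne
  exact absurd (le_csSup p.f_zero_of_lt_len_aux (by exact hne)) (not_le.mpr h)

lemma f_len_ne_zero (p : Partition') (h : 1 ≤ p.len) : p.f p.len ≠ 0 := by
  have hne : {i | p.f i ≠ 0}.Nonempty := by
    by_contra hemp
    rw [Set.not_nonempty_iff_eq_empty] at hemp
    have : p.len = 0 := by rw [len, hemp]; exact csSup_empty
    omega
  exact Nat.sSup_mem hne p.f_zero_of_lt_len_aux

lemma f_ne_zero_of_le_len (p : Partition') {i : ℕ} (h1 : 1 ≤ i) (h2 : i ≤ p.len) :
    p.f i ≠ 0 := by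
  have := p.f_len_ne_zero (le_trans h1 h2)
  have := p.antitone h1 h2
  omega

-- fix: prove directly
lemma len_le_iff (p : Partition') (L : ℕ) : p.len ≤ L ↔ p.f (L + 1) = 0 := by
  constructor
  · intro h; exact p.f_eq_zero_of_len_lt (by omega)
  · intro h
    by_contra hlt
    have h2 : p.f (L+1) ≠ 0 := p.f_ne_zero_of_le_len (by omega) (by omega)
    exact h2 h

end Partition'
namespace Partition'

section ConjLemmas

variable {g : ℕ → ℕ}

lemma conj_set_finite (hz : ∃ N, ∀ i, N ≤ i → g i = 0) {j : ℕ} (hj : 1 ≤ j) :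
    {i | 1 ≤ i ∧ j ≤ g i}.Finite := by
  obtain ⟨N, hN⟩ := hz
  apply Set.Finite.subset (Set.finite_Icc 1 N)
  rintro i ⟨hi1, hi2⟩
  refine ⟨hi1, ?_⟩
  by_contra h
  have := hN i (by omega)
  omega

lemma conjFun_iff (hg : ∀ ⦃i i'⦄, 1 ≤ i → i ≤ i' → g i' ≤ g i)
    (hz : ∃ N, ∀ i, N ≤ i → g i = 0) {j i : ℕ} (hj : 1 ≤ j) (hi : 1 ≤ i) :
    j ≤ g i ↔ i ≤ conjFun g j := by
  have hfin := conj_set_finite hz hj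
  have hbdd : BddAbove {i | 1 ≤ i ∧ j ≤ g i} := hfin.bddAbove
  rcases Set.eq_empty_or_nonempty {i | 1 ≤ i ∧ j ≤ g i} with hemp | hne
  · have hc : conjFun g j = 0 := by rw [conjFun, hemp, Set.ncard_empty]
    rw [hc]
    have : i ∉ {i | 1 ≤ i ∧ j ≤ g i} := by rw [hemp]; exact Set.notMem_empty i
    simp only [Set.mem_setOf_eq, not_and, not_le] at this
    constructor
    · intro h; exact absurd h (by have := this hi; omega)
    · omega
  · set m := sSup {i | 1 ≤ i ∧ j ≤ g i} with hm
    have hmem : m ∈ {i | 1 ≤ i ∧ j ≤ g i} := Nat.sSup_mem hne hbdd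
    have hset : {i | 1 ≤ i ∧ j ≤ g i} = Set.Icc 1 m := by
      ext x
      simp only [Set.mem_setOf_eq, Set.mem_Icc]
      constructor
      · rintro ⟨hx1, hx2⟩; exact ⟨hx1, le_csSup hbdd ⟨hx1, hx2⟩⟩
      · rintro ⟨hx1, hx2⟩
        exact ⟨hx1, le_trans hmem.2 (hg hx1 hx2)⟩
    have hc : conjFun g j = m := by
      rw [conjFun, hset, ← Finset.coe_Icc, Set.ncard_coe_finset, Nat.card_Icc]; omega
    rw [hc]
    constructor
    · intro h
      have : i ∈ {i | 1 ≤ i ∧ j ≤ g i} := ⟨hi, h⟩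
      exact le_csSup hbdd this
    · intro h
      have : i ∈ {i | 1 ≤ i ∧ j ≤ g i} := by rw [hset]; exact ⟨hi, h⟩
      exact this.2

lemma conjFun_antitone (hg : ∀ ⦃i i'⦄, 1 ≤ i → i ≤ i' → g i' ≤ g i)
    (hz : ∃ N, ∀ i, N ≤ i → g i = 0) {j j' : ℕ} (hj : 1 ≤ j) (hjj : j ≤ j') :
    conjFun g j' ≤ conjFun g j := by
  rcases Nat.eq_zero_or_pos (conjFun g j') with h | h
  · omega
  · have h1 : j' ≤ g (conjFun g j') :=
      (conjFun_iff hg hz (by omega) h).mpr le_rfl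
    exact (conjFun_iff hg hz hj h).mp (by omega)

lemma conjFun_eq_zero (hg : ∀ ⦃i i'⦄, 1 ≤ i → i ≤ i' → g i' ≤ g i)
    {j : ℕ} (hj : g 1 < j) : conjFun g j = 0 := by
  have : {i | 1 ≤ i ∧ j ≤ g i} = ∅ := by
    ext i
    simp only [Set.mem_setOf_eq, Set.mem_empty_iff_false, iff_false, not_and, not_le]
    intro hi
    have := hg le_rfl hi
    omega
  rw [conjFun, this, Set.ncard_empty]

lemma conjFun_ev_zero (hg : ∀ ⦃i i'⦄, 1 ≤ i → i ≤ i' → g i' ≤ g i) :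
    ∃ N, ∀ j, N ≤ j → conjFun g j = 0 :=
  ⟨g 1 + 1, fun j hj => conjFun_eq_zero hg (by omega)⟩

lemma conjconj (hg : ∀ ⦃i i'⦄, 1 ≤ i → i ≤ i' → g i' ≤ g i)
    (hz : ∃ N, ∀ i, N ≤ i → g i = 0) {i : ℕ} (hi : 1 ≤ i) :
    conjFun (conjFun g) i = g i := by
  have hset : {j | 1 ≤ j ∧ i ≤ conjFun g j} = Set.Icc 1 (g i) := by
    ext j
    simp only [Set.mem_setOf_eq, Set.mem_Icc]
    constructor
    · rintro ⟨hj1, hj2⟩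
      exact ⟨hj1, (conjFun_iff hg hz hj1 hi).mpr hj2⟩
    · rintro ⟨hj1, hj2⟩
      exact ⟨hj1, (conjFun_iff hg hz hj1 hi).mp hj2⟩
  rw [conjFun, hset, ← Finset.coe_Icc, Set.ncard_coe_finset, Nat.card_Icc]; omega

/-- conjFun only depends on values at `i ≥ 1`. -/
lemma conjFun_congr {g' : ℕ → ℕ} (h : ∀ i, 1 ≤ i → g i = g' i) (j : ℕ) :
    conjFun g j = conjFun g' j := by
  unfold conjFun
  congr 1
  ext i
  simp only [Set.mem_setOf_eq]
  constructor
  · rintro ⟨h1, h2⟩; exact ⟨h1, by rw [← h i h1]; exact h2⟩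
  · rintro ⟨h1, h2⟩; exact ⟨h1, by rw [h i h1]; exact h2⟩

end ConjLemmas

lemma conj_f_iff (p : Partition') {j i : ℕ} (hj : 1 ≤ j) (hi : 1 ≤ i) :
    j ≤ p.f i ↔ i ≤ conjFun p.f j :=
  conjFun_iff p.antitone p.ev_zero hj hi

lemma conjconj_f (p : Partition') {i : ℕ} (hi : 1 ≤ i) :
    conjFun (conjFun p.f) i = p.f i :=
  conjconj p.antitone p.ev_zero hi

lemma len_eq_conj_one (p : Partition') : p.len = conjFun p.f 1 := by
  rcases Nat.eq_zero_or_pos p.len with h | h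
  · have h0 : p.f 1 = 0 := p.f_eq_zero_of_len_lt (by omega)
    rw [h, conjFun_eq_zero p.antitone (by omega)]
  · have h1 : 1 ≤ p.f p.len := by
      have := p.f_len_ne_zero h; omega
    have h2 : p.len ≤ conjFun p.f 1 := (p.conj_f_iff le_rfl h).mp h1
    have h3 : conjFun p.f 1 ≤ p.len := by
      by_contra hc
      have : 1 ≤ p.f (p.len + 1) := (p.conj_f_iff le_rfl (by omega)).mpr (by omega)
      have := p.f_eq_zero_of_len_lt (show p.len < p.len + 1 by omega)
      omega
    omega

/-- Partition built from a conjugate-style function. -/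
noncomputable def mkConj (g : ℕ → ℕ) (hg : ∀ ⦃i i'⦄, 1 ≤ i → i ≤ i' → g i' ≤ g i)
    (hz : ∃ N, ∀ i, N ≤ i → g i = 0) : Partition' where
  f := fun i => if i = 0 then 0 else conjFun g i
  f_zero := by simp
  antitone := by
    intro i j hi hij
    simp only [if_neg (show ¬ i = 0 by omega), if_neg (show ¬ j = 0 by omega)]
    exact conjFun_antitone hg hz hi hij
  ev_zero := by
    obtain ⟨N, hN⟩ := conjFun_ev_zero hg
    exact ⟨N + 1, fun i hi => by simp only [if_neg (by omega : i ≠ 0)]; exact hN i (by omega)⟩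

lemma mkConj_conj (g : ℕ → ℕ) (hg : ∀ ⦃i i'⦄, 1 ≤ i → i ≤ i' → g i' ≤ g i)
    (hz : ∃ N, ∀ i, N ≤ i → g i = 0) {j : ℕ} (hj : 1 ≤ j) :
    conjFun (mkConj g hg hz).f j = g j := by
  have : conjFun (mkConj g hg hz).f j = conjFun (conjFun g) j := by
    apply conjFun_congr
    intro i hi
    simp only [mkConj, if_neg (show ¬ i = 0 by omega)]
  rw [this, conjconj hg hz hj]

end Partition'
namespace Partition'

/-- The set `{λ_i - i : i ≥ 1}` of shifted row coordinates. -/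
def Dset (p : Partition') : Set ℤ := {z | ∃ i : ℕ, 1 ≤ i ∧ z = (p.f i : ℤ) - i}

/-- The set `{λ†_j - j - n : j ≥ 1}` of shifted column coordinates. -/
def Xset (n : ℕ) (p : Partition') : Set ℤ :=
  {x | ∃ j : ℕ, 1 ≤ j ∧ x = (conjFun p.f j : ℤ) - j - n}

lemma compl_lemma (p : Partition') (z : ℤ) :
    z ∈ Dset p ↔ ∀ j : ℕ, 1 ≤ j → z ≠ (j : ℤ) - 1 - conjFun p.f j := by
  constructor
  · rintro ⟨i, hi, rfl⟩ j hj habs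
    by_cases hc : j ≤ p.f i
    · have := (p.conj_f_iff hj hi).mp hc
      omega
    · have : ¬ i ≤ conjFun p.f j := fun h => hc ((p.conj_f_iff hj hi).mpr h)
      omega
  · intro hz
    by_contra hnd
    set S : Set ℕ := {i | 1 ≤ i ∧ z < (p.f i : ℤ) - i} with hS
    have hbdd : BddAbove S := by
      refine ⟨(max 0 ((p.f 1 : ℤ) - z)).toNat, ?_⟩
      rintro i ⟨hi1, hi2⟩
      have := p.f_le_one hi1
      omega
    rcases Set.eq_empty_or_nonempty S with hemp | hne
    · -- all i ≥ 1 have f i ≤ z + i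
      have hall : ∀ i : ℕ, 1 ≤ i → (p.f i : ℤ) ≤ z + i := by
        intro i hi
        by_contra h
        exact (Set.eq_empty_iff_forall_notMem.mp hemp i) ⟨hi, by omega⟩
      by_cases hzneg : z ≤ -1
      · -- take i with z + i = 0
        set i := (-z).toNat with hi
        have hi1 : 1 ≤ i := by omega
        have hfi : (p.f i : ℤ) ≤ 0 := by have := hall i hi1; omega
        exact hnd ⟨i, hi1, by omega⟩
      · by_cases hf1 : (p.f 1 : ℤ) = z + 1
        · exact hnd ⟨1, le_rfl, by omega⟩
        · set j := (z + 1).toNat with hj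
          have hj1 : 1 ≤ j := by omega
          have hjz : (j : ℤ) = z + 1 := by omega
          have hfz : conjFun p.f j = 0 := by
            apply conjFun_eq_zero p.antitone
            have := hall 1 le_rfl
            omega
          exact hz j hj1 (by rw [hfz]; omega)
    · set m := sSup S with hm
      have hmem : m ∈ S := Nat.sSup_mem hne hbdd
      have hm1 : 1 ≤ m := hmem.1
      have hmz : z < (p.f m : ℤ) - m := hmem.2
      have hnot : m + 1 ∉ S := fun h => by
        have := le_csSup hbdd h; omega
      have hm1z : (p.f (m+1) : ℤ) - (m+1) ≤ z := by
        by_contra h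
        exact hnot ⟨by omega, by omega⟩
      by_cases heq : (p.f (m+1) : ℤ) - (m+1) = z
      · exact hnd ⟨m+1, by omega, by omega⟩
      · have hlt : (p.f (m+1) : ℤ) ≤ z + m := by omega
        set j := (z + m + 1).toNat with hj
        have hjz : (j : ℤ) = z + m + 1 := by
          have : (0:ℤ) ≤ z + m := le_trans (by positivity) hlt
          omega
        have hj1 : 1 ≤ j := by omega
        have hc1 : m ≤ conjFun p.f j := by
          apply (p.conj_f_iff hj1 hm1).mp
          omega
        have hc2 : conjFun p.f j ≤ m := by
          by_contra h
          have : j ≤ p.f (m+1) := (p.conj_f_iff hj1 (by omega)).mpr (by omega)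
          omega
        exact hz j hj1 (by omega)

lemma mem_X_iff (n : ℕ) (p : Partition') (y : ℤ) :
    y ∈ Xset n p ↔ (-1 - n - y) ∉ Dset p := by
  rw [compl_lemma]
  push_neg
  constructor
  · rintro ⟨j, hj, rfl⟩
    exact ⟨j, hj, by ring⟩
  · rintro ⟨j, hj, h⟩
    exact ⟨j, hj, by omega⟩

lemma mem_D_iff (n : ℕ) (p : Partition') (z : ℤ) :
    z ∈ Dset p ↔ (-1 - n - z) ∉ Xset n p := by
  rw [mem_X_iff]
  constructor
  · intro h hn; exact hn (by convert h using 2; ring)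
  · intro h; by_contra hn; exact h (by convert hn using 2; ring)

lemma X_strict (n : ℕ) (p : Partition') {j j' : ℕ} (hj : 1 ≤ j) (hjj : j < j') :
    (conjFun p.f j' : ℤ) - j' - n < (conjFun p.f j : ℤ) - j - n := by
  have := conjFun_antitone p.antitone p.ev_zero hj (le_of_lt hjj)
  omega

lemma D_strict (p : Partition') {i i' : ℕ} (hi : 1 ≤ i) (hii : i < i') :
    (p.f i' : ℤ) - i' < (p.f i : ℤ) - i := by
  have := p.antitone hi (le_of_lt hii)
  omega

lemma x1_mem (n : ℕ) (p : Partition') : ((p.len : ℤ) - 1 - n) ∈ Xset n p :=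
  ⟨1, le_rfl, by rw [len_eq_conj_one]; norm_num⟩

/-- Two strictly decreasing sequences with the same image agree. -/
lemma enum_unique {d d' : ℕ → ℤ}
    (hd : ∀ ⦃i i'⦄, 1 ≤ i → i < i' → d i' < d i)
    (hd' : ∀ ⦃i i'⦄, 1 ≤ i → i < i' → d' i' < d' i)
    (him : {z | ∃ i, 1 ≤ i ∧ z = d i} = {z | ∃ i, 1 ≤ i ∧ z = d' i}) :
    ∀ i, 1 ≤ i → d i = d' i := by
  intro i
  induction i using Nat.strong_induction_on with
  | _ i IH =>
    intro hi
    have key : ∀ (e e' : ℕ → ℤ),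
        (∀ ⦃a b⦄, 1 ≤ a → a < b → e b < e a) →
        (∀ ⦃a b⦄, 1 ≤ a → a < b → e' b < e' a) →
        {z | ∃ a, 1 ≤ a ∧ z = e a} = {z | ∃ a, 1 ≤ a ∧ z = e' a} →
        (∀ j, j < i → 1 ≤ j → e j = e' j) → ¬ e i < e' i := by
      intro e e' he he' heim hIH hlt
      have hmem : e' i ∈ {z | ∃ a, 1 ≤ a ∧ z = e a} := by
        rw [heim]; exact ⟨i, hi, rfl⟩
      obtain ⟨j, hj1, hj2⟩ := hmem
      have hji : j < i := by
        by_contra h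
        rcases Nat.lt_or_ge i j with h1 | h1
        · have := he hi h1; omega
        · have : j = i := by omega
          subst this; omega
      have := hIH j hji hj1
      have := he' hj1 hji
      omega
    have h1 := key d d' hd hd' him (fun j hj hj1 => IH j hj hj1)
    have h2 := key d' d hd' hd him.symm (fun j hj hj1 => (IH j hj hj1).symm)
    omega

lemma eq_of_Xset_eq (n : ℕ) {p q : Partition'} (h : Xset n p = Xset n q) : p = q := by
  have hconj : ∀ j, 1 ≤ j → conjFun p.f j = conjFun q.f j := by
    have := enum_unique (d := fun j => (conjFun p.f j : ℤ) - j - n)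
      (d' := fun j => (conjFun q.f j : ℤ) - j - n)
      (fun a b ha hab => X_strict n p ha hab)
      (fun a b ha hab => X_strict n q ha hab)
      (by rw [show {z | ∃ i, 1 ≤ i ∧ z = (conjFun p.f i : ℤ) - i - n} = Xset n p from rfl,
          show {z | ∃ i, 1 ≤ i ∧ z = (conjFun q.f i : ℤ) - i - n} = Xset n q from rfl, h])
    intro j hj
    have h2 : (conjFun p.f j : ℤ) - j - n = (conjFun q.f j : ℤ) - j - n := this j hj
    omega
  apply ext'
  funext i
  rcases Nat.eq_zero_or_pos i with h0 | h0
  · rw [h0, p.f_zero, q.f_zero]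
  · rw [← p.conjconj_f h0, ← q.conjconj_f h0]
    exact conjFun_congr (fun j hj => hconj j hj) i
end Partition'
namespace Partition'

/-- The explicit complement partition when removing the unique border strip through
`(len,1)` starting at row `r`. -/
noncomputable def nuF (μ : Partition') (r : ℕ) : ℕ → ℕ := fun i =>
  if i < r then μ.f i else if i < μ.len then μ.f (i+1) - 1 else 0

lemma adj_symm {a b : ℕ × ℕ} (h : Adj a b) : Adj b a := by
  unfold Adj at *; tauto

lemma mem_cells_iff' {μ ν : Partition'} {i j : ℕ} :
    (i, j) ∈ cells μ ν ↔ 1 ≤ i ∧ ν.f i < j ∧ j ≤ μ.f i := Iff.rfl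

section StripProps

variable {μ ν : Partition'} {r : ℕ}

lemma rows_covered {s : Set (ℕ × ℕ)} {a b : ℕ × ℕ} (hb : b ∈ s)
    (h : Relation.ReflTransGen (fun x y => x ∈ s ∧ y ∈ s ∧ Adj x y) a b) :
    ∀ t, ((a.1 ≤ t ∧ t ≤ b.1) ∨ (b.1 ≤ t ∧ t ≤ a.1)) → ∃ c ∈ s, c.1 = t := by
  induction h using Relation.ReflTransGen.head_induction_on with
  | refl => intro t ht; exact ⟨b, hb, by omega⟩
  | head h' hpath ih =>
    rename_i x y
    intro t ht
    obtain ⟨hxs, hys, hadj⟩ := h'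
    have hd : x.1 = y.1 ∨ x.1 + 1 = y.1 ∨ y.1 + 1 = x.1 := by
      rcases hadj with ⟨h1, _⟩ | ⟨_, h2⟩
      · exact Or.inl h1
      · exact Or.inr h2
    by_cases htc : (y.1 ≤ t ∧ t ≤ b.1) ∨ (b.1 ≤ t ∧ t ≤ y.1)
    · exact ih t htc
    · push_neg at htc
      exact ⟨x, hxs, by omega⟩

lemma cross_path {s : Set (ℕ × ℕ)} {a b : ℕ × ℕ} {i : ℕ}
    (h : Relation.ReflTransGen (fun x y => x ∈ s ∧ y ∈ s ∧ Adj x y) a b)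
    (ha : i + 1 ≤ a.1) (hb : b.1 ≤ i) :
    ∃ c, (i+1, c) ∈ s ∧ (i, c) ∈ s := by
  induction h using Relation.ReflTransGen.head_induction_on with
  | refl => omega
  | head h' hpath ih =>
    rename_i x y
    obtain ⟨hxs, hys, hadj⟩ := h'
    by_cases hy : i + 1 ≤ y.1
    · exact ih hy
    · rcases hadj with ⟨h1, _⟩ | ⟨h2, h3⟩
      · omega
      · have hx1 : x.1 = i + 1 := by omega
        have hy1 : y.1 = i := by omega
        refine ⟨x.2, ?_, ?_⟩
        · have hxx : (i+1, x.2) = x := by rw [← hx1]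
          rw [hxx]; exact hxs
        · have hyy : (i, y.2) = y := by rw [← hy1]
          rw [h2, hyy]; exact hys

lemma horiz_path {μ ν : Partition'} {i j j' : ℕ} (h : (i, j) ∈ cells μ ν)
    (h1 : ν.f i < j') (h2 : j' ≤ j) :
    Relation.ReflTransGen
      (fun x y => x ∈ cells μ ν ∧ y ∈ cells μ ν ∧ Adj x y) (i, j) (i, j') := by
  rw [mem_cells_iff'] at h
  obtain ⟨hi1, hij, hji⟩ := h
  have H : ∀ d, j' + d ≤ μ.f i → Relation.ReflTransGen
      (fun x y => x ∈ cells μ ν ∧ y ∈ cells μ ν ∧ Adj x y) (i, j' + d) (i, j') := by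
    intro d
    induction d with
    | zero => intro _; exact Relation.ReflTransGen.refl
    | succ m ih =>
      intro hle
      have hm : (i, j' + m) ∈ cells μ ν := mem_cells_iff'.mpr ⟨hi1, by omega, by omega⟩
      have hm1 : (i, j' + m + 1) ∈ cells μ ν := mem_cells_iff'.mpr ⟨hi1, by omega, by omega⟩
      have hstep : (fun x y => x ∈ cells μ ν ∧ y ∈ cells μ ν ∧ Adj x y)
          (i, j' + m + 1) (i, j' + m) := ⟨hm1, hm, Or.inl ⟨rfl, Or.inr rfl⟩⟩
      exact Relation.ReflTransGen.head hstep (ih (by omega))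
  have hd : j' + (j - j') = j := by omega
  have := H (j - j') (by omega)
  rwa [hd] at this

variable (hν : ∀ i, ν.f i = nuF μ r i) (hr : 1 ≤ r) (hrL : r ≤ μ.len)
include hν hr hrL

omit hr hrL in
lemma nu_lt_r {i : ℕ} (h : i < r) : ν.f i = μ.f i := by
  rw [hν]; unfold nuF; rw [if_pos h]

omit hr hrL in
lemma nu_mid {i : ℕ} (h1 : r ≤ i) (h2 : i < μ.len) : ν.f i = μ.f (i+1) - 1 := by
  rw [hν]; unfold nuF; rw [if_neg (by omega), if_pos h2]

omit hr in
lemma nu_ge {i : ℕ} (h : μ.len ≤ i) : ν.f i = 0 := by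
  rw [hν]; unfold nuF
  rcases Nat.lt_or_ge i r with h' | h'
  · rw [if_pos h']
    exact μ.f_eq_zero_of_len_lt (by omega)
  · rw [if_neg (by omega), if_neg (by omega)]

lemma nu_sub : Sub ν μ := by
  intro i
  rcases Nat.lt_or_ge i r with h | h
  · rw [nu_lt_r hν h]
  · rcases Nat.lt_or_ge i μ.len with h2 | h2
    · rw [nu_mid hν h h2]
      have := μ.antitone (show 1 ≤ i by omega) (show i ≤ i+1 by omega)
      omega
    · rw [nu_ge hν hrL h2]; omega

lemma cells_iff {i j : ℕ} :
    (i, j) ∈ cells μ ν ↔ (r ≤ i ∧ i ≤ μ.len ∧ ν.f i < j ∧ j ≤ μ.f i) := by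
  rw [mem_cells_iff']
  constructor
  · rintro ⟨hi1, hij, hji⟩
    have hir : r ≤ i := by
      by_contra h
      rw [nu_lt_r hν (by omega)] at hij
      omega
    have hiL : i ≤ μ.len := by
      by_contra h
      have := μ.f_eq_zero_of_len_lt (show μ.len < i by omega)
      omega
    exact ⟨hir, hiL, hij, hji⟩
  · rintro ⟨h1, h2, h3, h4⟩
    exact ⟨by omega, h3, h4⟩

lemma nu_box : (μ.len, 1) ∈ cells μ ν := by
  have hL1 : 1 ≤ μ.len := le_trans hr hrL
  have h2 := μ.f_len_ne_zero hL1
  have h3 : ν.f μ.len = 0 := nu_ge hν hrL le_rfl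
  exact mem_cells_iff'.mpr ⟨by omega, by omega, by omega⟩

lemma nu_no22 : ¬ ∃ i j : ℕ, (i, j) ∈ cells μ ν ∧ (i + 1, j) ∈ cells μ ν ∧
    (i, j + 1) ∈ cells μ ν ∧ (i + 1, j + 1) ∈ cells μ ν := by
  rintro ⟨i, j, h1, h2, h3, h4⟩
  rw [cells_iff hν hr hrL] at h1 h2 h3 h4
  have hiL : i < μ.len := by omega
  have hnui : ν.f i = μ.f (i+1) - 1 := nu_mid hν (by omega) hiL
  have hf1 : 1 ≤ μ.f (i+1) := by
    have := μ.f_ne_zero_of_le_len (show 1 ≤ i+1 by omega) (show i+1 ≤ μ.len by omega)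
    omega
  omega

lemma nu_conn : IsConnected (cells μ ν) := by
  have hL1 : 1 ≤ μ.len := le_trans hr hrL
  have base : ∀ d i j, μ.len - i ≤ d → (i, j) ∈ cells μ ν →
      Relation.ReflTransGen
        (fun x y => x ∈ cells μ ν ∧ y ∈ cells μ ν ∧ Adj x y) (i, j) (μ.len, 1) := by
    intro d
    induction d with
    | zero =>
      intro i j hd hc
      have h' := (cells_iff hν hr hrL).mp hc
      have hi : i = μ.len := by omega
      subst hi
      have h0 : ν.f μ.len = 0 := nu_ge hν hrL le_rfl
      exact horiz_path hc (by omega) (by omega)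
    | succ m ih =>
      intro i j hd hc
      have h' := (cells_iff hν hr hrL).mp hc
      rcases Nat.eq_or_lt_of_le h'.2.1 with hi | hi
      · have h0 : ν.f μ.len = 0 := nu_ge hν hrL le_rfl
        rw [hi] at hc ⊢
        rw [mem_cells_iff'] at hc
        exact horiz_path (mem_cells_iff'.mpr hc) (by omega) (by omega)
      · have hnui : ν.f i = μ.f (i+1) - 1 := nu_mid hν h'.1 hi
        have hf1 : 1 ≤ μ.f (i+1) :=
          Nat.one_le_iff_ne_zero.mpr (μ.f_ne_zero_of_le_len (by omega) (by omega))
        have hcell2 : (i, μ.f (i+1)) ∈ cells μ ν := by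
          rw [cells_iff hν hr hrL]
          have := μ.antitone (show 1 ≤ i by omega) (show i ≤ i + 1 by omega)
          exact ⟨h'.1, by omega, by omega, by omega⟩
        have hcell3 : (i+1, μ.f (i+1)) ∈ cells μ ν := by
          rw [cells_iff hν hr hrL]
          refine ⟨by omega, by omega, ?_, le_rfl⟩
          rcases Nat.lt_or_ge (i+1) μ.len with hh | hh
          · rw [nu_mid hν (by omega) hh]
            have := μ.antitone (show 1 ≤ i+1 by omega) (show i+1 ≤ i+1+1 by omega)
            omega
          · rw [nu_ge hν hrL hh]; omega
        have hpath1 := horiz_path hc (show ν.f i < μ.f (i+1) by omega)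
          (show μ.f (i+1) ≤ j by omega)
        have hstep : (fun x y => x ∈ cells μ ν ∧ y ∈ cells μ ν ∧ Adj x y)
            (i, μ.f (i+1)) (i+1, μ.f (i+1)) := ⟨hcell2, hcell3, Or.inr ⟨rfl, Or.inl rfl⟩⟩
        exact Relation.ReflTransGen.trans hpath1
          (Relation.ReflTransGen.head hstep (ih (i+1) (μ.f (i+1)) (by omega) hcell3))
  intro a ha b hb
  have hsym : Symmetric (fun x y => x ∈ cells μ ν ∧ y ∈ cells μ ν ∧ Adj x y) :=
    fun x y ⟨h1, h2, h3⟩ => ⟨h2, h1, adj_symm h3⟩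
  have h1 := base μ.len a.1 a.2 (by omega) (by rwa [Prod.mk.eta])
  have h2 := base μ.len b.1 b.2 (by omega) (by rwa [Prod.mk.eta])
  exact Relation.ReflTransGen.trans h1 (by haveI : Std.Symm (fun x y => x ∈ cells μ ν ∧ y ∈ cells μ ν ∧ Adj x y) := ⟨fun _ _ h => hsym h⟩; exact Std.Symm.symm _ _ h2)

lemma nu_borderstrip : IsBorderStrip μ ν :=
  ⟨nu_sub hν hr hrL, ⟨(μ.len, 1), nu_box hν hr hrL⟩, nu_conn hν hr hrL, nu_no22 hν hr hrL⟩

end StripProps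

end Partition'
namespace Partition'

section StripProps2

variable {μ ν : Partition'} {r : ℕ}
variable (hν : ∀ i, ν.f i = nuF μ r i) (hr : 1 ≤ r) (hrL : r ≤ μ.len)
include hν hr hrL

lemma cells_eq_finset :
    cells μ ν = ↑((Finset.Icc r μ.len).biUnion
      (fun i => (Finset.Ioc (ν.f i) (μ.f i)).image (fun j => (i, j)))) := by
  ext ⟨i, j⟩
  rw [cells_iff hν hr hrL]
  simp only [Finset.coe_biUnion, Set.mem_iUnion, Finset.mem_coe, Finset.mem_Icc,
    Finset.mem_image, Finset.mem_Ioc, Prod.mk.injEq]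
  constructor
  · rintro ⟨h1, h2, h3, h4⟩
    exact ⟨i, ⟨h1, h2⟩, j, ⟨h3, h4⟩, rfl, rfl⟩
  · rintro ⟨a, ⟨ha1, ha2⟩, b, ⟨hb1, hb2⟩, rfl, rfl⟩
    exact ⟨ha1, ha2, hb1, hb2⟩

lemma strip_size : stripSize μ ν = μ.f r + (μ.len - r) := by
  have hsum : ∀ d r', r ≤ r' → 1 ≤ r' → r' + d = μ.len →
      (∑ i ∈ Finset.Icc r' μ.len, (μ.f i - ν.f i)) = μ.f r' + d := by
    intro d
    induction d with
    | zero =>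
      intro r' _ _ hL
      rw [← hL]
      simp only [Nat.add_zero, Finset.Icc_self, Finset.sum_singleton]
      rw [nu_ge hν hrL (by omega)]
      omega
    | succ m ih =>
      intro r' hrr' h1 hL
      have hins : Finset.Icc r' μ.len = insert r' (Finset.Icc (r'+1) μ.len) := by
        ext x
        simp only [Finset.mem_Icc, Finset.mem_insert]
        omega
      rw [hins, Finset.sum_insert (by simp only [Finset.mem_Icc]; omega)]
      rw [ih (r'+1) (by omega) (by omega) (by omega)]
      rw [nu_mid hν hrr' (by omega)]
      have hf1 : 1 ≤ μ.f (r'+1) := by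
        have := μ.f_ne_zero_of_le_len (show 1 ≤ r'+1 by omega) (show r'+1 ≤ μ.len by omega)
        omega
      have := μ.antitone h1 (show r' ≤ r'+1 by omega)
      omega
  rw [stripSize, cells_eq_finset hν hr hrL, Set.ncard_coe_finset]
  rw [Finset.card_biUnion]
  · have hcard : ∀ i ∈ Finset.Icc r μ.len,
        ((Finset.Ioc (ν.f i) (μ.f i)).image (fun j => (i, j))).card = μ.f i - ν.f i := by
      intro i _
      rw [Finset.card_image_of_injective _ (fun a b h => by
        simpa using congrArg Prod.snd h)]
      rw [Nat.card_Ioc]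
    rw [Finset.sum_congr rfl hcard]
    exact hsum (μ.len - r) r le_rfl hr (by omega)
  · intro a _ b _ hab
    simp only [Finset.disjoint_left, Finset.mem_image, Finset.mem_Ioc]
    rintro ⟨x, y⟩ ⟨j, _, hj⟩ ⟨j', _, hj'⟩
    apply hab
    have := congrArg Prod.fst hj
    have := congrArg Prod.fst hj'
    simp_all

lemma nu_Dset :
    Dset ν = (Dset μ \ {(μ.f r : ℤ) - r}) ∪ {-(μ.len : ℤ)} := by
  have hL1 : 1 ≤ μ.len := le_trans hr hrL
  ext z
  simp only [Set.mem_union, Set.mem_diff, Set.mem_singleton_iff]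
  constructor
  · rintro ⟨i, hi1, rfl⟩
    rcases Nat.lt_or_ge i r with h | h
    · left
      refine ⟨⟨i, hi1, by rw [nu_lt_r hν h]⟩, ?_⟩
      rw [nu_lt_r hν h]
      have := D_strict μ hi1 (show i < r by omega)
      omega
    · rcases Nat.lt_or_ge i μ.len with h2 | h2
      · have hm := nu_mid hν h h2
        have hf1 : 1 ≤ μ.f (i+1) := by
          have := μ.f_ne_zero_of_le_len (show 1 ≤ i+1 by omega) (show i+1 ≤ μ.len by omega)
          omega
        left
        refine ⟨⟨i+1, by omega, by rw [hm]; omega⟩, ?_⟩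
        rw [hm]
        have := D_strict μ hr (show r < i + 1 by omega)
        omega
      · rcases Nat.eq_or_lt_of_le h2 with h3 | h3
        · right; rw [nu_ge hν hrL h2, ← h3]; omega
        · left
          have hz : ν.f i = 0 := nu_ge hν hrL h2
          have hz2 : μ.f i = 0 := μ.f_eq_zero_of_len_lt h3
          refine ⟨⟨i, hi1, by rw [hz, hz2]⟩, ?_⟩
          rw [hz]
          have := D_strict μ hr (show r < i by omega)
          omega
  · rintro (⟨⟨i, hi1, rfl⟩, hne⟩ | h)
    · rcases Nat.lt_or_ge i r with h | h
      · exact ⟨i, hi1, by rw [nu_lt_r hν h]⟩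
      · rcases Nat.eq_or_lt_of_le h with h2 | h2
        · exact absurd (by rw [h2]) hne
        · rcases le_or_gt i μ.len with h3 | h3
          · have hm := nu_mid hν (show r ≤ i - 1 by omega) (show i - 1 < μ.len by omega)
            have hf1 : 1 ≤ μ.f i := by
              have := μ.f_ne_zero_of_le_len (show 1 ≤ i by omega) h3
              omega
            refine ⟨i - 1, by omega, ?_⟩
            have hi' : i - 1 + 1 = i := by omega
            rw [hm, hi']
            omega
          · have hz2 : μ.f i = 0 := μ.f_eq_zero_of_len_lt h3
            exact ⟨i, hi1, by rw [nu_ge hν hrL (by omega), hz2]⟩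
    · exact ⟨μ.len, hL1, by rw [nu_ge hν hrL le_rfl, h]; omega⟩

lemma nu_len_lt : ν.len < μ.len := by
  have hL1 : 1 ≤ μ.len := le_trans hr hrL
  have : ν.len ≤ μ.len - 1 := by
    rw [len_le_iff]
    exact nu_ge hν hrL (by omega)
  omega

end StripProps2

/-- The strip complement as a Partition. -/
noncomputable def nuPart (μ : Partition') (r : ℕ) (hr : 1 ≤ r) (hrL : r ≤ μ.len) :
    Partition' where
  f := nuF μ r
  f_zero := by unfold nuF; rw [if_pos (by omega)]; exact μ.f_zero
  antitone := by
    intro i j hi hij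
    unfold nuF
    have h1 := μ.antitone hi hij
    have h2 : μ.f (j+1) ≤ μ.f (i+1) := μ.antitone (by omega) (by omega)
    have h3 : μ.f (j+1) ≤ μ.f i := μ.antitone hi (by omega)
    split_ifs <;> omega
  ev_zero := by
    obtain ⟨N, hN⟩ := μ.ev_zero
    refine ⟨N + μ.len + r + 1, fun i hi => ?_⟩
    unfold nuF
    rw [if_neg (by omega), if_neg (by omega)]

/-- Uniqueness: any border strip through `(len, 1)` has the explicit form. -/
lemma strip_shape (μ ν : Partition') (hbs : IsBorderStrip μ ν)
    (hbox : (μ.len, 1) ∈ cells μ ν) :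
    ∃ r, 1 ≤ r ∧ r ≤ μ.len ∧ (∀ i, ν.f i = nuF μ r i) := by
  obtain ⟨hsub, hne, hconn, h22⟩ := hbs
  rw [mem_cells_iff'] at hbox
  obtain ⟨hL1, hbox1, hbox2⟩ := hbox
  have hnuL : ν.f μ.len = 0 := by omega
  set O : Set ℕ := {i | ν.f i < μ.f i} with hO
  have hOsub : ∀ i ∈ O, 1 ≤ i ∧ i ≤ μ.len := by
    intro i hi
    constructor
    · by_contra h
      have h0 : i = 0 := by omega
      subst h0
      simp only [hO, Set.mem_setOf_eq] at hi
      have := ν.f_zero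
      have := μ.f_zero
      omega
    · by_contra h
      have := μ.f_eq_zero_of_len_lt (show μ.len < i by omega)
      simp only [hO, Set.mem_setOf_eq] at hi
      omega
  have hLO : μ.len ∈ O := by simp only [hO, Set.mem_setOf_eq]; omega
  have hOne : O.Nonempty := ⟨μ.len, hLO⟩
  set r := sInf O with hrdef
  have hrO : r ∈ O := Nat.sInf_mem hOne
  have hr1 : 1 ≤ r := (hOsub r hrO).1
  have hrL : r ≤ μ.len := Nat.sInf_le hLO
  have cellO : ∀ i, i ∈ O → (i, ν.f i + 1) ∈ cells μ ν := by
    intro i hi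
    have h1 := (hOsub i hi).1
    simp only [hO, Set.mem_setOf_eq] at hi
    exact mem_cells_iff'.mpr ⟨h1, by omega, by omega⟩
  have Ocell : ∀ c ∈ cells μ ν, c.1 ∈ O := by
    rintro ⟨i, j⟩ hc
    rw [mem_cells_iff'] at hc
    simp only [hO, Set.mem_setOf_eq]
    omega
  have interval : ∀ t, r ≤ t → t ≤ μ.len → t ∈ O := by
    intro t ht1 ht2
    have ha := cellO r hrO
    have hbmem : (μ.len, 1) ∈ cells μ ν := mem_cells_iff'.mpr ⟨by omega, by omega, by omega⟩
    have hpath := hconn _ ha _ hbmem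
    obtain ⟨c, hc, hct⟩ := rows_covered hbmem hpath t (Or.inl ⟨ht1, ht2⟩)
    rw [← hct]
    exact Ocell c hc
  have mid : ∀ i, r ≤ i → i < μ.len → ν.f i = μ.f (i+1) - 1 := by
    intro i hi1 hi2
    have hiO : i ∈ O := interval i hi1 (by omega)
    have hi1O : i + 1 ∈ O := interval (i+1) (by omega) (by omega)
    have hi1' : 1 ≤ i := (hOsub i hiO).1
    have ha := cellO (i+1) hi1O
    have hb := cellO i hiO
    have hpath := hconn _ ha _ hb
    obtain ⟨c, hc1, hc2⟩ := cross_path hpath (le_refl (i+1)) (le_refl i)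
    rw [mem_cells_iff'] at hc1 hc2
    -- ν.f i < c ≤ μ.f (i+1), so ν.f i ≤ μ.f (i+1) - 1
    have hub : ν.f i < μ.f (i+1) := by omega
    have hlb : μ.f (i+1) ≤ ν.f i + 1 := by
      by_contra hcon
      apply h22
      refine ⟨i, ν.f i + 1, ?_, ?_, ?_, ?_⟩ <;> rw [mem_cells_iff']
      · have := μ.antitone (show 1 ≤ i by omega) (show i ≤ i + 1 by omega)
        exact ⟨by omega, by omega, by omega⟩
      · have := ν.antitone (show 1 ≤ i by omega) (show i ≤ i + 1 by omega)
        exact ⟨by omega, by omega, by omega⟩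
      · have := μ.antitone (show 1 ≤ i by omega) (show i ≤ i + 1 by omega)
        exact ⟨by omega, by omega, by omega⟩
      · have := ν.antitone (show 1 ≤ i by omega) (show i ≤ i + 1 by omega)
        exact ⟨by omega, by omega, by omega⟩
    omega
  refine ⟨r, hr1, hrL, fun i => ?_⟩
  unfold nuF
  rcases Nat.lt_or_ge i r with h1 | h1
  · rw [if_pos h1]
    rcases Nat.eq_zero_or_pos i with h0 | h0
    · rw [h0, ν.f_zero, μ.f_zero]
    · have hiO : i ∉ O := Nat.notMem_of_lt_sInf (by omega)
      simp only [hO, Set.mem_setOf_eq, not_lt] at hiO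
      have := hsub i
      omega
  · rw [if_neg (by omega)]
    rcases Nat.lt_or_ge i μ.len with h2 | h2
    · rw [if_pos h2]
      exact mid i h1 h2
    · rw [if_neg (by omega)]
      rcases Nat.eq_or_lt_of_le h2 with h3 | h3
      · rw [← h3]; exact hnuL
      · have := μ.f_eq_zero_of_len_lt h3
        have := hsub i
        omega

end Partition'
namespace Partition'

/-- The finiteness condition for the modification rule. -/
def Good (n : ℕ) (μ : Partition') : Prop :=
  ∀ x ∈ Xset n μ, 0 ≤ x → -x ∉ Xset n μ

lemma X_neg_of_len_le {n : ℕ} {μ : Partition'} (h : μ.len ≤ n) :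
    ∀ x ∈ Xset n μ, x ≤ -1 := by
  rintro x ⟨j, hj, rfl⟩
  have hc : conjFun μ.f j ≤ conjFun μ.f 1 :=
    conjFun_antitone μ.antitone μ.ev_zero le_rfl hj
  rw [← len_eq_conj_one] at hc
  omega

section StripX

variable {μ ν : Partition'} {r : ℕ}
variable (hν : ∀ i, ν.f i = nuF μ r i) (hr : 1 ≤ r) (hrL : r ≤ μ.len)
include hν hr hrL

lemma nu_Xset (n : ℕ) (hLn : (n:ℤ) + 2 ≤ μ.len)
    (he : (μ.f r : ℤ) - r = (μ.len:ℤ) - 2*n - 2) :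
    Xset n ν = (Xset n μ \ {(μ.len:ℤ) - 1 - n}) ∪ {-((μ.len:ℤ) - 1 - n)} := by
  ext y
  rw [mem_X_iff, nu_Dset hν hr hrL]
  simp only [Set.mem_union, Set.mem_diff, Set.mem_singleton_iff, mem_X_iff n μ]
  have h1 : ((-1:ℤ) - n - y = (μ.f r:ℤ) - r) ↔ y = -((μ.len:ℤ) - 1 - n) := by omega
  have h2 : ((-1:ℤ) - n - y = -(μ.len : ℤ)) ↔ y = (μ.len:ℤ) - 1 - n := by omega
  constructor
  · intro h
    push_neg at h
    obtain ⟨ha, hb⟩ := h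
    by_cases hd : ((-1:ℤ) - n - y) ∈ Dset μ
    · right; exact h1.mp (ha hd)
    · left; exact ⟨hd, fun hy => hb (h2.mpr hy)⟩
  · intro h hmem
    rcases hmem with ⟨hd, hne⟩ | hLeq
    · rcases h with ⟨hnd, _⟩ | hy
      · exact hnd hd
      · exact hne (h1.mpr hy)
    · rcases h with ⟨_, hne⟩ | hy
      · exact hne (h2.mp hLeq)
      · omega

end StripX

lemma forward_lemma {n : ℕ} {μ : Partition'} {i : ℕ} {τ : Partition'}
    (h : ModRule n μ i τ) :
    Good n μ ∧ τ.len ≤ n ∧ Xset n τ = (fun x => -|x|) '' Xset n μ := by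
  induction h with
  | base μ h =>
    have hneg := X_neg_of_len_le h
    refine ⟨fun x hx hx0 => absurd hx0 (by have := hneg x hx; omega), h, ?_⟩
    ext z
    constructor
    · intro hz
      have := hneg z hz
      exact ⟨z, hz, by simp only; rw [abs_of_neg (by omega : z < 0)]; ring⟩
    · rintro ⟨y, hy, rfl⟩
      have := hneg y hy
      simp only
      rw [abs_of_neg (by omega : y < 0), neg_neg]
      exact hy
  | step μ ν τ i hlen hbs hsize hbox hrec ih =>
    obtain ⟨hGν, hlτ, hXτ⟩ := ih
    obtain ⟨r, hr1, hrL, hν⟩ := strip_shape μ ν hbs hbox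
    have hfr1 : 1 ≤ μ.f r := by
      have := μ.f_ne_zero_of_le_len hr1 hrL; omega
    have hss := strip_size hν hr1 hrL
    have hLn2 : n + 2 ≤ μ.len := by omega
    have he : (μ.f r : ℤ) - r = (μ.len:ℤ) - 2*n - 2 := by omega
    have hXν := nu_Xset hν hr1 hrL n (by omega) he
    obtain ⟨x1, hx1def⟩ : ∃ x1 : ℤ, x1 = (μ.len:ℤ) - 1 - n := ⟨_, rfl⟩
    rw [← hx1def] at hXν
    have hx1m : x1 ∈ Xset n μ := by rw [hx1def]; exact x1_mem n μ
    have hnx1 : -x1 ∉ Xset n μ := by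
      have heD : ((μ.len:ℤ) - 2*n - 2) ∈ Dset μ := ⟨r, hr1, by omega⟩
      rw [mem_D_iff n] at heD
      intro hmem
      apply heD
      have : -x1 = -1 - (n:ℤ) - ((μ.len:ℤ) - 2*n - 2) := by omega
      rwa [← this]
    refine ⟨?_, hlτ, ?_⟩
    · intro x hx hx0
      by_cases hxx : x = x1
      · rwa [hxx]
      · have hxν : x ∈ Xset n ν := by
          rw [hXν]; exact Or.inl ⟨hx, hxx⟩
        have := hGν x hxν hx0
        intro hmem
        apply this
        rw [hXν]
        left
        refine ⟨hmem, fun hx1' => ?_⟩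
        rw [Set.mem_singleton_iff] at hx1'
        -- -x = x1 means x = -x1 < 0
        omega
    · rw [hXτ, hXν]
      ext z
      simp only [Set.mem_image, Set.mem_union, Set.mem_diff, Set.mem_singleton_iff]
      constructor
      · rintro ⟨y, hy, rfl⟩
        rcases hy with ⟨hy1, _⟩ | hy2
        · exact ⟨y, hy1, rfl⟩
        · exact ⟨x1, hx1m, by rw [hy2]; simp [abs_neg]⟩
      · rintro ⟨y, hy, rfl⟩
        by_cases hyy : y = x1
        · exact ⟨-x1, Or.inr rfl, by rw [hyy]; simp [abs_neg]⟩
        · exact ⟨y, Or.inl ⟨hy, hyy⟩, rfl⟩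

lemma backward_lemma (n : ℕ) (μ : Partition') (hG : Good n μ) :
    ∃ i τ, ModRule n μ i τ := by
  have H : ∀ L, ∀ μ : Partition', μ.len = L → Good n μ → ∃ i τ, ModRule n μ i τ := by
    intro L
    induction L using Nat.strong_induction_on with
    | _ L IH =>
      intro μ hL hG
      by_cases hlen : μ.len ≤ n
      · exact ⟨0, μ, .base μ hlen⟩
      · push_neg at hlen
        obtain ⟨x1, hx1def⟩ : ∃ x1 : ℤ, x1 = (μ.len:ℤ) - 1 - n := ⟨_, rfl⟩
        have hx1m : x1 ∈ Xset n μ := by rw [hx1def]; exact x1_mem n μ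
        have hnx1 : -x1 ∉ Xset n μ := hG x1 hx1m (by omega)
        have hLn2 : n + 2 ≤ μ.len := by
          by_contra hc
          have h0 : x1 = 0 := by omega
          apply hnx1
          rw [h0, neg_zero, ← h0]
          exact hx1m
        have heD : ((μ.len:ℤ) - 2*n - 2) ∈ Dset μ := by
          rw [mem_D_iff n]
          intro hmem
          apply hnx1
          have : -x1 = -1 - (n:ℤ) - ((μ.len:ℤ) - 2*n - 2) := by omega
          rwa [this]
        obtain ⟨r, hr1, hre⟩ := heD
        have hrL : r ≤ μ.len := by
          by_contra hc
          have := μ.f_eq_zero_of_len_lt (show μ.len < r by omega)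
          omega
        set ν := nuPart μ r hr1 hrL with hνdef
        have hν : ∀ i, ν.f i = nuF μ r i := fun i => rfl
        have hsize : stripSize μ ν = 2 * (μ.len - n - 1) := by
          rw [strip_size hν hr1 hrL]
          omega
        have hXν := nu_Xset hν hr1 hrL n (by omega) (by omega)
        rw [← hx1def] at hXν
        have hGν : Good n ν := by
          intro x hx hx0
          rw [hXν] at hx
          rcases hx with ⟨hx1', hxne⟩ | hx2
          · have hnx := hG x hx1' hx0
            intro hmem
            rw [hXν] at hmem
            rcases hmem with ⟨hm1, _⟩ | hm2
            · exact hnx hm1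
            · -- -x = -x1, so x = x1, but -x1 ∉ Xμ... x = x1 contradicts hxne
              rw [Set.mem_singleton_iff] at hm2
              exact hxne (show x ∈ {x1} by rw [Set.mem_singleton_iff]; omega)
          · -- x = -x1 < 0
            exfalso
            rw [Set.mem_singleton_iff] at hx2
            omega
        have hlt := nu_len_lt hν hr1 hrL
        obtain ⟨i, τ, hMR⟩ := IH ν.len (by omega) ν rfl hGν
        exact ⟨cols μ ν + i, τ,
          .step μ ν τ i hlen (nu_borderstrip hν hr1 hrL) hsize (nu_box hν hr1 hrL) hMR⟩
  exact H μ.len μ rfl hG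

end Partition'
namespace Partition'

lemma i2_lt_top_iff (n : ℕ) (μ : Partition') :
    i2 n μ < ⊤ ↔ ∃ i τ, ModRule n μ i τ := by
  rw [i2]
  constructor
  · intro h
    by_contra hc
    have : {c : ℕ∞ | ∃ i τ, ModRule n μ i τ ∧ c = (i : ℕ∞)} = ∅ := by
      ext c
      simp only [Set.mem_setOf_eq, Set.mem_empty_iff_false, iff_false]
      rintro ⟨i, τ, hm, _⟩
      exact hc ⟨i, τ, hm⟩
    rw [this, sInf_empty] at h
    exact absurd h (lt_irrefl _)
  · rintro ⟨i, τ, hm⟩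
    have h1 : sInf {c : ℕ∞ | ∃ i τ, ModRule n μ i τ ∧ c = (i : ℕ∞)} ≤ (i : ℕ∞) :=
      sInf_le ⟨i, τ, hm, rfl⟩
    exact lt_of_le_of_lt h1 (by exact_mod_cast WithTop.coe_lt_top i)

lemma tau_modrule {n : ℕ} {μ : Partition'} (h : ∃ i τ, ModRule n μ i τ) :
    ∃ i, ModRule n μ i (tau n μ) := by
  obtain ⟨i, τ, hm⟩ := h
  have h' : ∃ it : ℕ × Partition', ModRule n μ it.1 it.2 := ⟨(i, τ), hm⟩
  rw [tau, dif_pos h']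
  exact ⟨h'.choose.1, h'.choose_spec⟩

/-- The shifted column coordinate. -/
noncomputable def xval (n : ℕ) (μ : Partition') (j : ℕ) : ℤ := (conjFun μ.f j : ℤ) - j - n

lemma mem_Xset_iff {n : ℕ} {μ : Partition'} {y : ℤ} :
    y ∈ Xset n μ ↔ ∃ j, 1 ≤ j ∧ y = xval n μ j := Iff.rfl

lemma xval_strict {n : ℕ} (μ : Partition') {j j' : ℕ} (hj : 1 ≤ j) (hjj : j < j') :
    xval n μ j' < xval n μ j := X_strict n μ hj hjj

section DomainFacts

variable {n k : ℕ} {μ : Partition'}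

lemma conj_eq_zero_of_gt (h1k : μ.f 1 ≤ k) {j : ℕ} (hj : k < j) :
    conjFun μ.f j = 0 :=
  conjFun_eq_zero μ.antitone (by omega)

lemma xval_tail (h1k : μ.f 1 ≤ k) {j : ℕ} (hj : k < j) :
    xval n μ j = -(n:ℤ) - j := by
  rw [xval, conj_eq_zero_of_gt h1k hj]
  push_cast
  ring

lemma X_decomp (h1k : μ.f 1 ≤ k) :
    ∀ y ∈ Xset n μ, (∃ j, 1 ≤ j ∧ j ≤ k ∧ y = xval n μ j) ∨
      (∃ j : ℕ, k < j ∧ y = -(n:ℤ) - j) := by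
  rintro y ⟨j, hj, rfl⟩
  rcases le_or_gt j k with h | h
  · exact Or.inl ⟨j, hj, h, rfl⟩
  · exact Or.inr ⟨j, h, xval_tail h1k h⟩

/-- F1: under `Good`, the head values are nonzero and bounded. -/
lemma xval_bound (h1k : μ.f 1 ≤ k) (hG : Good n μ) {j : ℕ} (hj : 1 ≤ j) (hjk : j ≤ k) :
    xval n μ j ≠ 0 ∧ -((n:ℤ) + k) ≤ xval n μ j ∧ xval n μ j ≤ (n:ℤ) + k := by
  have hmem : xval n μ j ∈ Xset n μ := ⟨j, hj, rfl⟩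
  have hne : xval n μ j ≠ 0 := by
    intro h0
    exact hG _ hmem (by omega) (by rw [h0, neg_zero, ← h0]; exact hmem)
  have hlb : -((n:ℤ) + k) ≤ xval n μ j := by
    rw [xval]
    have : (0:ℤ) ≤ conjFun μ.f j := by positivity
    omega
  refine ⟨hne, hlb, ?_⟩
  by_contra hub
  push_neg at hub
  -- xval j > n + k; then -(xval j) = -n - j'' with j'' > k, which is in X
  have hj'' : ∃ j'' : ℕ, k < j'' ∧ (j'' : ℤ) = xval n μ j - n := by
    refine ⟨(xval n μ j - n).toNat, by omega, by omega⟩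
  obtain ⟨j'', hj''1, hj''2⟩ := hj''
  have hmem2 : -xval n μ j ∈ Xset n μ := by
    rw [mem_Xset_iff]
    exact ⟨j'', by omega, by rw [xval_tail h1k hj''1]; omega⟩
  exact hG _ hmem (by omega) hmem2

/-- F2: absolute values of head entries are distinct. -/
lemma xval_abs_inj (h1k : μ.f 1 ≤ k) (hG : Good n μ) {j j' : ℕ}
    (hj : 1 ≤ j) (hjk : j ≤ k) (hj' : 1 ≤ j') (hj'k : j' ≤ k)
    (h : |xval n μ j| = |xval n μ j'|) : j = j' := by
  by_contra hne
  -- wlog j < j'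
  have key : ∀ a b, 1 ≤ a → a < b → b ≤ k → |xval n μ a| = |xval n μ b| → False := by
    intro a b ha hab hbk habs
    have hstrict := xval_strict (n := n) μ ha hab
    have hcases : xval n μ a = -xval n μ b := by
      rcases abs_eq_abs.mp habs with h1 | h2
      · omega
      · omega
    rcases le_or_gt 0 (xval n μ a) with h0 | h0
    · refine hG (xval n μ a) ⟨a, ha, rfl⟩ h0 ?_
      rw [hcases, neg_neg]
      exact ⟨b, by omega, rfl⟩
    · omega
  rcases Nat.lt_or_ge j j' with h1 | h1
  · exact key j j' hj h1 hj'k h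
  · exact key j' j hj' (by omega) hjk h.symm

/-- F6: decomposition of `Xset n τ` when it is the reflected image. -/
lemma Xtau_decomp (h1k : μ.f 1 ≤ k) (hG : Good n μ) {τ : Partition'}
    (hX : Xset n τ = (fun x => -|x|) '' Xset n μ) :
    ∀ y ∈ Xset n τ, (∃ j, 1 ≤ j ∧ j ≤ k ∧ y = -|xval n μ j|) ∨ y ≤ -(n:ℤ) - k - 1 := by
  intro y hy
  rw [hX] at hy
  obtain ⟨z, hz, rfl⟩ := hy
  rcases X_decomp h1k z hz with ⟨j, hj1, hj2, rfl⟩ | ⟨j, hj1, rfl⟩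
  · exact Or.inl ⟨j, hj1, hj2, rfl⟩
  · right
    simp only
    rw [abs_of_nonpos (by omega : -(n:ℤ) - j ≤ 0)]
    omega

/-- F7: the reflected partition has first part at most `k`. -/
lemma tau_first_le (h1k : μ.f 1 ≤ k) (hG : Good n μ) {τ : Partition'}
    (hX : Xset n τ = (fun x => -|x|) '' Xset n μ) : τ.f 1 ≤ k := by
  by_contra hc
  push_neg at hc
  have h1 : 1 ≤ conjFun τ.f (k+1) :=
    (τ.conj_f_iff (by omega) le_rfl).mp (by omega)
  -- the values xval n τ 1, ..., xval n τ (k+1) are k+1 distinct elements ≥ -(n+k)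
  have hlow : ∀ j, 1 ≤ j → j ≤ k + 1 → -((n:ℤ) + k) ≤ xval n τ j := by
    intro j hj hjk
    have : xval n τ (k+1) ≤ xval n τ j := by
      rcases Nat.eq_or_lt_of_le hjk with h | h
      · rw [h]
      · exact le_of_lt (xval_strict τ hj h)
    have h2 : -((n:ℤ) + k) ≤ xval n τ (k+1) := by
      rw [xval]; omega
    omega
  -- each of them is of the form -|xval n μ j'| with j' ≤ k
  have hform : ∀ j, 1 ≤ j → j ≤ k + 1 → ∃ j', 1 ≤ j' ∧ j' ≤ k ∧
      xval n τ j = -|xval n μ j'| := by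
    intro j hj hjk
    rcases Xtau_decomp h1k hG hX (xval n τ j) ⟨j, hj, rfl⟩ with h | h
    · exact h
    · have := hlow j hj hjk
      omega
  -- injectivity gives k+1 ≤ k
  have hcard : (Finset.Icc 1 (k+1)).card ≤ ((Finset.Icc 1 k).image
      (fun j' => -|xval n μ j'|)).card := by
    apply Finset.card_le_card_of_injOn (fun j => xval n τ j)
    · intro j hj
      rw [Finset.mem_coe, Finset.mem_Icc] at hj
      obtain ⟨j', h1, h2, h3⟩ := hform j hj.1 hj.2
      rw [Finset.mem_coe, Finset.mem_image]
      exact ⟨j', Finset.mem_Icc.mpr ⟨h1, h2⟩, h3.symm⟩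
    · intro a ha b hb hab
      rw [Finset.mem_coe, Finset.mem_Icc] at ha hb
      have hab' : xval n τ a = xval n τ b := hab
      by_contra hne
      rcases Nat.lt_or_ge a b with h | h
      · have := xval_strict (n := n) τ ha.1 h; omega
      · have := xval_strict (n := n) (j' := a) τ hb.1 (by omega); omega
  have h1 := Finset.card_image_le (s := Finset.Icc 1 k) (f := fun j' => -|xval n μ j'|)
  rw [Nat.card_Icc] at hcard
  rw [Nat.card_Icc] at h1
  omega

/-- F5: the tail entries are exactly the complement of head absolute values. -/
lemma block2_iff (h1k : μ.f 1 ≤ k) (hG : Good n μ) {τ : Partition'}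
    (hlτ : τ.len ≤ n) (hX : Xset n τ = (fun x => -|x|) '' Xset n μ)
    {t : ℤ} (ht1 : 1 ≤ t) (ht2 : t ≤ (n:ℤ) + k) :
    (∃ j : ℕ, 1 ≤ j ∧ j ≤ n ∧ t = (τ.f j : ℤ) + n + 1 - j) ↔
      ¬ ∃ j, 1 ≤ j ∧ j ≤ k ∧ |xval n μ j| = t := by
  have hD : (t - n - 1) ∈ Dset τ ↔ ∃ j : ℕ, 1 ≤ j ∧ j ≤ n ∧ t = (τ.f j : ℤ) + n + 1 - j := by
    constructor
    · rintro ⟨i, hi1, hieq⟩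
      have hin : i ≤ n := by
        by_contra hc
        have : τ.f i = 0 := τ.f_eq_zero_of_len_lt (by omega)
        omega
      exact ⟨i, hi1, hin, by omega⟩
    · rintro ⟨j, hj1, hjn, hjeq⟩
      exact ⟨j, hj1, by omega⟩
  have hDX : (t - n - 1) ∈ Dset τ ↔ -t ∉ Xset n τ := by
    rw [mem_D_iff n, show (-1 - (n:ℤ) - (t - n - 1)) = -t from by ring]
  have hXim : -t ∈ Xset n τ ↔ ∃ j, 1 ≤ j ∧ j ≤ k ∧ |xval n μ j| = t := by
    rw [hX]
    constructor
    · rintro ⟨y, hy, hyeq⟩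
      simp only at hyeq
      rcases X_decomp h1k y hy with ⟨j, hj1, hj2, rfl⟩ | ⟨j, hj1, rfl⟩
      · exact ⟨j, hj1, hj2, by omega⟩
      · exfalso
        rw [abs_of_nonpos (by omega : -(n:ℤ) - j ≤ 0)] at hyeq
        omega
    · rintro ⟨j, hj1, hj2, hjeq⟩
      exact ⟨xval n μ j, ⟨j, hj1, rfl⟩, by simp only; omega⟩
  rw [← hD, hDX, hXim]

end DomainFacts

end Partition'
namespace Partition'

section SeqFacts

variable {n k : ℕ} {μ : Partition'}

lemma seqOf_zero {p : ℕ} (h : p = 0 ∨ n + k < p) : seqOf n k μ p = 0 := by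
  unfold seqOf
  rcases h with h | h
  · rw [if_pos h]
  · rw [if_neg (by omega), if_neg (by omega), if_neg (by omega)]

lemma seqOf_lo {p : ℕ} (hp1 : 1 ≤ p) (hpk : p ≤ k) :
    seqOf n k μ p = -(xval n μ (k + 1 - p)) := by
  unfold seqOf
  rw [if_neg (by omega), if_pos hpk, xval]
  have : ((k + 1 - p : ℕ) : ℤ) = (k : ℤ) + 1 - p := by omega
  omega

lemma seqOf_hi {p : ℕ} (hp1 : k + 1 ≤ p) (hpk : p ≤ n + k) :
    seqOf n k μ p = ((n : ℤ) + 1 - ((p : ℤ) - k)) + (tau n μ).f (p - k) := by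
  unfold seqOf
  rw [if_neg (by omega), if_neg (by omega), if_pos hpk]

variable (h1k : μ.f 1 ≤ k) (hG : Good n μ)
  (hlτ : (tau n μ).len ≤ n)
  (hX : Xset n (tau n μ) = (fun x => -|x|) '' Xset n μ)

include h1k hG hlτ hX

omit hlτ hX in
lemma seq_dec1 : ∀ p q : ℕ, 1 ≤ p → p < q → q ≤ k → seqOf n k μ q < seqOf n k μ p := by
  intro p q hp hpq hqk
  rw [seqOf_lo hp (by omega), seqOf_lo (by omega) hqk]
  have := xval_strict (n := n) (j := k + 1 - q) (j' := k + 1 - p) μ (by omega) (by omega)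
  omega

omit h1k hG hX in
lemma seq_dec2 : ∀ p q : ℕ, k + 1 ≤ p → p < q → q ≤ n + k →
    seqOf n k μ q < seqOf n k μ p := by
  intro p q hp hpq hqk
  rw [seqOf_hi hp (by omega), seqOf_hi (by omega) hqk]
  have := (tau n μ).antitone (show 1 ≤ p - k by omega) (show p - k ≤ q - k by omega)
  omega

omit h1k hG hX in
lemma seq_pos : ∀ p : ℕ, k + 1 ≤ p → p ≤ n + k → 0 < seqOf n k μ p := by
  intro p hp hpk
  rw [seqOf_hi hp hpk]
  have : (0:ℤ) ≤ (tau n μ).f (p - k) := by positivity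
  omega

lemma seq_abs_lo {p : ℕ} (hp1 : 1 ≤ p) (hpk : p ≤ k) :
    1 ≤ (seqOf n k μ p).natAbs ∧ (seqOf n k μ p).natAbs ≤ n + k := by
  have hs := seqOf_lo (n := n) (k := k) (μ := μ) hp1 hpk
  obtain ⟨h1, h2, h3⟩ := xval_bound h1k hG (show 1 ≤ k + 1 - p by omega)
    (show k + 1 - p ≤ k by omega)
  omega

lemma seq_abs_hi {p : ℕ} (hp1 : k + 1 ≤ p) (hpk : p ≤ n + k) :
    1 ≤ (seqOf n k μ p).natAbs ∧ (seqOf n k μ p).natAbs ≤ n + k := by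
  have hs := seqOf_hi (n := n) (k := k) (μ := μ) hp1 hpk
  have h0 : (0:ℤ) ≤ (tau n μ).f (p - k) := by positivity
  have h1 : (tau n μ).f (p - k) ≤ (tau n μ).f 1 := (tau n μ).f_le_one (by omega)
  have h2 : (tau n μ).f 1 ≤ k := tau_first_le h1k hG hX
  omega

lemma seq_bijOn :
    Set.BijOn (fun p => (seqOf n k μ p).natAbs) (Set.Icc 1 (n + k)) (Set.Icc 1 (n + k)) := by
  refine ⟨?_, ?_, ?_⟩
  · -- MapsTo
    intro p hp
    rw [Set.mem_Icc] at hp ⊢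
    rcases le_or_gt p k with h | h
    · exact seq_abs_lo h1k hG hlτ hX hp.1 h
    · exact seq_abs_hi h1k hG hlτ hX (by omega) hp.2
  · -- InjOn
    intro p hp q hq heq
    rw [Set.mem_Icc] at hp hq
    simp only at heq
    -- helper for the mixed case
    have mixed : ∀ a b : ℕ, 1 ≤ a → a ≤ k → k + 1 ≤ b → b ≤ n + k →
        (seqOf n k μ a).natAbs = (seqOf n k μ b).natAbs → False := by
      intro a b ha1 hak hb1 hbk hab
      have hsb := seqOf_hi (n := n) (k := k) (μ := μ) hb1 hbk
      have hpos := seq_pos (n := n) (k := k) (μ := μ) hlτ b hb1 hbk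
      have habs := seq_abs_hi h1k hG hlτ hX hb1 hbk
      have hsa := seqOf_lo (n := n) (k := k) (μ := μ) ha1 hak
      obtain ⟨hx1, hx2, hx3⟩ := xval_bound h1k hG (show 1 ≤ k + 1 - a by omega)
        (show k + 1 - a ≤ k by omega)
      have hiff := block2_iff h1k hG hlτ hX
        (t := seqOf n k μ b) (by omega) (by omega)
      have hex : ∃ j : ℕ, 1 ≤ j ∧ j ≤ n ∧
          seqOf n k μ b = ((tau n μ).f j : ℤ) + n + 1 - j := by
        exact ⟨b - k, by omega, by omega, by rw [hsb]; push_cast; omega⟩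
      have hno := hiff.mp hex
      apply hno
      refine ⟨k + 1 - a, by omega, by omega, ?_⟩
      rw [Int.abs_eq_natAbs, ← Int.natAbs_neg, ← hsa, hab,
        Int.natAbs_of_nonneg (by omega)]
    rcases le_or_gt p k with h1 | h1 <;> rcases le_or_gt q k with h2 | h2
    · -- both low
      have hsp := seqOf_lo (n := n) (k := k) (μ := μ) hp.1 h1
      have hsq := seqOf_lo (n := n) (k := k) (μ := μ) hq.1 h2
      have habs : |xval n μ (k + 1 - p)| = |xval n μ (k + 1 - q)| := by
        rw [Int.abs_eq_natAbs, Int.abs_eq_natAbs]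
        omega
      have := xval_abs_inj h1k hG (show 1 ≤ k + 1 - p by omega) (by omega)
        (show 1 ≤ k + 1 - q by omega) (by omega) habs
      omega
    · exact absurd heq (by intro hc; exact mixed p q hp.1 h1 (by omega) hq.2 hc)
    · exact absurd heq (by intro hc; exact mixed q p hq.1 h2 (by omega) hp.2 hc.symm)
    · -- both high
      by_contra hne
      have key : ∀ a b, k + 1 ≤ a → a < b → b ≤ n + k →
          (seqOf n k μ a).natAbs = (seqOf n k μ b).natAbs → False := by
        intro a b ha hab hbk h
        have := seq_dec2 (n := n) (k := k) (μ := μ) hlτ a b ha hab hbk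
        have := seq_pos (n := n) (k := k) (μ := μ) hlτ a (by omega) (by omega)
        have := seq_pos (n := n) (k := k) (μ := μ) hlτ b (by omega) hbk
        omega
      rcases Nat.lt_or_ge p q with h | h
      · exact key p q (by omega) h hq.2 heq
      · exact key q p (by omega) (by omega) hp.2 heq.symm
  · -- SurjOn
    intro t ht
    rw [Set.mem_Icc] at ht
    by_cases hex : ∃ j, 1 ≤ j ∧ j ≤ k ∧ |xval n μ j| = (t : ℤ)
    · obtain ⟨j, hj1, hj2, hj3⟩ := hex
      refine ⟨k + 1 - j, ?_, ?_⟩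
      · rw [Set.mem_Icc]; omega
      · simp only
        have hs := seqOf_lo (n := n) (k := k) (μ := μ) (p := k + 1 - j) (by omega) (by omega)
        have hjj : k + 1 - (k + 1 - j) = j := by omega
        rw [hjj] at hs
        have : |xval n μ j| = ((xval n μ j).natAbs : ℤ) := by rw [Int.abs_eq_natAbs]
        omega
    · have hiff := block2_iff h1k hG hlτ hX (t := (t:ℤ)) (by omega) (by omega)
      have := hiff.mpr (by
        intro ⟨j, hj1, hj2, hj3⟩
        exact hex ⟨j, hj1, hj2, hj3⟩)
      obtain ⟨j, hj1, hj2, hj3⟩ := this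
      refine ⟨k + j, ?_, ?_⟩
      · rw [Set.mem_Icc]; omega
      · simp only
        have hs := seqOf_hi (n := n) (k := k) (μ := μ) (p := k + j) (by omega) (by omega)
        have hkj : k + j - k = j := by omega
        rw [hkj] at hs
        omega

end SeqFacts

/-- Injectivity of `seqOf` on the domain. -/
lemma seqOf_inj {n k : ℕ} {μ μ' : Partition'} (h1k : μ.f 1 ≤ k) (h1k' : μ'.f 1 ≤ k)
    (heq : ∀ p, seqOf n k μ p = seqOf n k μ' p) : μ = μ' := by
  apply eq_of_Xset_eq n
  have hx : ∀ j, 1 ≤ j → xval n μ j = xval n μ' j := by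
    intro j hj
    rcases le_or_gt j k with h | h
    · have h1 := seqOf_lo (n := n) (k := k) (μ := μ) (p := k + 1 - j) (by omega) (by omega)
      have h2 := seqOf_lo (n := n) (k := k) (μ := μ') (p := k + 1 - j) (by omega) (by omega)
      have hjj : k + 1 - (k + 1 - j) = j := by omega
      rw [hjj] at h1 h2
      have := heq (k + 1 - j)
      omega
    · rw [xval_tail h1k h, xval_tail h1k' h]
  ext y
  rw [mem_Xset_iff, mem_Xset_iff]
  constructor
  · rintro ⟨j, hj, rfl⟩; exact ⟨j, hj, hx j hj⟩
  · rintro ⟨j, hj, rfl⟩; exact ⟨j, hj, (hx j hj).symm⟩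

end Partition'
namespace Partition'

section Surj

variable {n k : ℕ} {s : ℕ → ℤ}

lemma conjFun_one_le {g : ℕ → ℕ} (hz : ∀ i, k < i → g i = 0) : conjFun g 1 ≤ k := by
  have hsub : {i | 1 ≤ i ∧ 1 ≤ g i} ⊆ Set.Icc 1 k := by
    rintro i ⟨h1, h2⟩
    refine ⟨h1, ?_⟩
    by_contra h
    have := hz i (by omega)
    omega
  calc Set.ncard {i | 1 ≤ i ∧ 1 ≤ g i} ≤ (Set.Icc 1 k).ncard :=
        Set.ncard_le_ncard hsub (Set.finite_Icc 1 k)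
    _ = k := by rw [← Finset.coe_Icc, Set.ncard_coe_finset, Nat.card_Icc]; omega

variable
  (h0 : ∀ p : ℕ, p = 0 ∨ n + k < p → s p = 0)
  (hbij : Set.BijOn (fun p => (s p).natAbs) (Set.Icc 1 (n + k)) (Set.Icc 1 (n + k)))
  (h3 : ∀ p q : ℕ, 1 ≤ p → p < q → q ≤ k → s q < s p)
  (h4 : ∀ p q : ℕ, k + 1 ≤ p → p < q → q ≤ n + k → s q < s p)
  (h5 : ∀ p : ℕ, k + 1 ≤ p → p ≤ n + k → 0 < s p)

include hbij in
lemma s_abs_bound : ∀ p, 1 ≤ p → p ≤ n + k →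
    1 ≤ (s p).natAbs ∧ (s p).natAbs ≤ n + k := by
  intro p h1 h2
  have := hbij.mapsTo (Set.mem_Icc.mpr ⟨h1, h2⟩)
  rw [Set.mem_Icc] at this
  exact this

include h3 in
lemma claimC : ∀ d p, 1 ≤ p → p + d ≤ k → s (p + d) ≤ s p - d := by
  intro d
  induction d with
  | zero => intro p _ _; simp
  | succ m ih =>
    intro p hp hpd
    have h1 := ih p hp (by omega)
    have h2 := h3 (p + m) (p + m + 1) (by omega) (by omega) (by omega)
    have : p + (m + 1) = p + m + 1 := by omega
    rw [this]
    push_cast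
    omega

include h4 in
lemma claimD : ∀ d p, k + 1 ≤ p → p + d ≤ n + k → s (p + d) ≤ s p - d := by
  intro d
  induction d with
  | zero => intro p _ _; simp
  | succ m ih =>
    intro p hp hpd
    have h1 := ih p hp (by omega)
    have h2 := h4 (p + m) (p + m + 1) (by omega) (by omega) (by omega)
    have : p + (m + 1) = p + m + 1 := by omega
    rw [this]
    push_cast
    omega

include hbij h3 in
lemma claimA : ∀ p, 1 ≤ p → p ≤ k → s p ≤ (n:ℤ) + k + 1 - p := by
  intro p h1 h2
  have hC := claimC h3 (p - 1) 1 le_rfl (by omega)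
  have h1' : 1 + (p - 1) = p := by omega
  rw [h1'] at hC
  have hs1 := s_abs_bound hbij 1 le_rfl (by omega)
  omega

include hbij h4 h5 in
lemma claimB : ∀ j, 1 ≤ j → j ≤ n → (n:ℤ) + 1 - j ≤ s (k + j) := by
  intro j hj1 hjn
  have hD := claimD h4 (n - j) (k + j) (by omega) (by omega)
  have h1' : k + j + (n - j) = k + n := by omega
  rw [h1'] at hD
  have h5' := h5 (k + n) (by omega) (by omega)
  omega

/-- The conjugate data of the partition `μ` determined by the head of `s`. -/
def gOf (n k : ℕ) (s : ℕ → ℤ) : ℕ → ℕ := fun j =>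
  if 1 ≤ j ∧ j ≤ k then ((n:ℤ) + j - s (k + 1 - j)).toNat else 0

include hbij h3 in
lemma gOf_val : ∀ j, 1 ≤ j → j ≤ k → (gOf n k s j : ℤ) = (n:ℤ) + j - s (k + 1 - j) := by
  intro j h1 h2
  have hA := claimA hbij h3 (k + 1 - j) (by omega) (by omega)
  have hc : ((k + 1 - j : ℕ) : ℤ) = (k:ℤ) + 1 - j := by omega
  rw [gOf, if_pos ⟨h1, h2⟩]
  omega

include hbij h3 in
lemma gOf_mono : ∀ ⦃i i' : ℕ⦄, 1 ≤ i → i ≤ i' → gOf n k s i' ≤ gOf n k s i := by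
  intro i i' hi hii
  rcases le_or_gt i' k with h | h
  · have hv := gOf_val hbij h3 i hi (by omega)
    have hv' := gOf_val hbij h3 i' (by omega) h
    have hC := claimC h3 (i' - i) (k + 1 - i') (by omega) (by omega)
    have he : k + 1 - i' + (i' - i) = k + 1 - i := by omega
    rw [he] at hC
    omega
  · rw [gOf, if_neg (by omega)]
    omega

lemma gOf_zero : ∃ N, ∀ i, N ≤ i → gOf n k s i = 0 :=
  ⟨k + 1, fun i hi => by rw [gOf, if_neg (by omega)]⟩

/-- The partition `μ` determined by `s`. -/
noncomputable def muOf (n k : ℕ) (s : ℕ → ℤ)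
    (hbij : Set.BijOn (fun p => (s p).natAbs) (Set.Icc 1 (n + k)) (Set.Icc 1 (n + k)))
    (h3 : ∀ p q : ℕ, 1 ≤ p → p < q → q ≤ k → s q < s p) : Partition' :=
  mkConj (gOf n k s) (gOf_mono hbij h3) gOf_zero

include hbij h3

lemma muOf_f1 : (muOf n k s hbij h3).f 1 ≤ k := by
  show (if (1:ℕ) = 0 then 0 else conjFun (gOf n k s) 1) ≤ k
  rw [if_neg (by omega)]
  exact conjFun_one_le (fun i hi => by rw [gOf, if_neg (by omega)])

lemma muOf_conj : ∀ j, 1 ≤ j → conjFun (muOf n k s hbij h3).f j = gOf n k s j :=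
  fun j hj => mkConj_conj _ _ _ hj

lemma muOf_xval : ∀ j, 1 ≤ j → j ≤ k →
    xval n (muOf n k s hbij h3) j = -s (k + 1 - j) := by
  intro j h1 h2
  rw [xval, muOf_conj hbij h3 j h1, gOf_val hbij h3 j h1 h2]
  ring

lemma muOf_good : Good n (muOf n k s hbij h3) := by
  intro y hy hy0
  have h1k := muOf_f1 hbij h3
  rcases X_decomp h1k y hy with ⟨j, hj1, hj2, rfl⟩ | ⟨j, hj1, rfl⟩
  · rw [muOf_xval hbij h3 j hj1 hj2] at hy0 ⊢
    have habs := s_abs_bound hbij (k + 1 - j) (by omega) (by omega)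
    intro hmem
    rcases X_decomp h1k _ hmem with ⟨j', hj'1, hj'2, hj'3⟩ | ⟨j', hj'1, hj'3⟩
    · rw [muOf_xval hbij h3 j' hj'1 hj'2] at hj'3
      have hnn : (s (k + 1 - j)).natAbs = (s (k + 1 - j')).natAbs := by omega
      have := hbij.injOn (Set.mem_Icc.mpr ⟨by omega, by omega⟩)
        (Set.mem_Icc.mpr (⟨by omega, by omega⟩ : 1 ≤ k + 1 - j' ∧ k + 1 - j' ≤ n + k)) hnn
      rw [this] at hj'3 habs
      omega
    · omega
  · omega

/-- The partition `τ` determined by the tail of `s`. -/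
def tauF (n k : ℕ) (s : ℕ → ℤ) : ℕ → ℕ := fun j =>
  if 1 ≤ j ∧ j ≤ n then (s (k + j) - ((n:ℤ) + 1 - j)).toNat else 0

noncomputable def tauOf (n k : ℕ) (s : ℕ → ℤ)
    (hbij : Set.BijOn (fun p => (s p).natAbs) (Set.Icc 1 (n + k)) (Set.Icc 1 (n + k)))
    (h4 : ∀ p q : ℕ, k + 1 ≤ p → p < q → q ≤ n + k → s q < s p)
    (h5 : ∀ p : ℕ, k + 1 ≤ p → p ≤ n + k → 0 < s p) : Partition' where
  f := tauF n k s
  f_zero := by unfold tauF; rw [if_neg (by omega)]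
  antitone := by
    intro i j hi hij
    unfold tauF
    rcases le_or_gt j n with h | h
    · rw [if_pos (⟨by omega, h⟩ : 1 ≤ j ∧ j ≤ n), if_pos (⟨hi, by omega⟩ : 1 ≤ i ∧ i ≤ n)]
      have hD := claimD h4 (j - i) (k + i) (by omega) (by omega)
      have he : k + i + (j - i) = k + j := by omega
      rw [he] at hD
      omega
    · rw [if_neg (show ¬ (1 ≤ j ∧ j ≤ n) by omega)]
      omega
  ev_zero := ⟨n + 1, fun i hi => by unfold tauF; rw [if_neg (by omega)]⟩

omit h3 in
include h4 h5 in
lemma tauOf_val : ∀ j, 1 ≤ j → j ≤ n →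
    ((tauOf n k s hbij h4 h5).f j : ℤ) = s (k + j) - ((n:ℤ) + 1 - j) := by
  intro j h1 h2
  have hB := claimB hbij h4 h5 j h1 h2
  show ((tauF n k s j : ℕ) : ℤ) = _
  unfold tauF
  rw [if_pos ⟨h1, h2⟩]
  omega

omit h3 in
include h4 h5 in
lemma tauOf_len : (tauOf n k s hbij h4 h5).len ≤ n := by
  rw [len_le_iff]
  show tauF n k s (n + 1) = 0
  unfold tauF
  rw [if_neg (by omega)]

include h4 h5 in
lemma tauOf_Xset :
    Xset n (tauOf n k s hbij h4 h5) = (fun x => -|x|) '' Xset n (muOf n k s hbij h3) := by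
  have h1k := muOf_f1 hbij h3
  have hDτ : ∀ z : ℤ, z ∈ Dset (tauOf n k s hbij h4 h5) ↔
      (∃ j : ℕ, 1 ≤ j ∧ j ≤ n ∧ z = s (k + j) - (n:ℤ) - 1) ∨ z ≤ -(n:ℤ) - 1 := by
    intro z
    constructor
    · rintro ⟨i, hi1, rfl⟩
      rcases le_or_gt i n with h | h
      · left
        refine ⟨i, hi1, h, ?_⟩
        rw [tauOf_val hbij h4 h5 i hi1 h]
        ring
      · right
        have : (tauOf n k s hbij h4 h5).f i = 0 := by
          show tauF n k s i = 0
          unfold tauF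
          rw [if_neg (by omega)]
        rw [this]
        omega
    · rintro (⟨j, hj1, hjn, rfl⟩ | hz)
      · exact ⟨j, hj1, by rw [tauOf_val hbij h4 h5 j hj1 hjn]; ring⟩
      · refine ⟨(-z).toNat, by omega, ?_⟩
        have : (tauOf n k s hbij h4 h5).f (-z).toNat = 0 := by
          show tauF n k s (-z).toNat = 0
          unfold tauF
          rw [if_neg (by omega)]
        rw [this]
        omega
  ext y
  rw [mem_X_iff, hDτ]
  push_neg
  constructor
  · rintro ⟨hall, hy1⟩
    -- y ≤ -1 and y ≠ -s (k+j) for all j ∈ [1,n]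
    have hyneg : y ≤ -1 := by omega
    have hne : ∀ j : ℕ, 1 ≤ j → j ≤ n → y ≠ -s (k + j) := by
      intro j hj1 hjn hy
      exact absurd (by omega : (-1 : ℤ) - n - y = s (k + j) - n - 1) (hall j hj1 hjn)
    rcases le_or_gt (-y) ((n:ℤ) + k) with hbound | hbound
    · -- -y ∈ [1, n+k]; use surjectivity
      obtain ⟨p, hp, hpv⟩ := hbij.surjOn (Set.mem_Icc.mpr
        (⟨by omega, by omega⟩ : 1 ≤ (-y).toNat ∧ (-y).toNat ≤ n + k))
      rw [Set.mem_Icc] at hp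
      simp only at hpv
      rcases le_or_gt p k with hpk | hpk
      · refine ⟨xval n (muOf n k s hbij h3) (k + 1 - p), ⟨k + 1 - p, by omega, rfl⟩, ?_⟩
        simp only
        rw [muOf_xval hbij h3 (k + 1 - p) (by omega) (by omega)]
        have hr : k + 1 - (k + 1 - p) = p := by omega
        rw [hr, abs_neg, Int.abs_eq_natAbs]
        omega
      · exfalso
        have h5' := h5 p (by omega) hp.2
        have := hne (p - k) (by omega) (by omega)
        have he : k + (p - k) = p := by omega
        rw [he] at this
        omega
    · -- -y > n + k: tail element
      refine ⟨xval n (muOf n k s hbij h3) ((-y).toNat - n),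
        ⟨(-y).toNat - n, by omega, rfl⟩, ?_⟩
      simp only
      rw [xval_tail h1k (by omega : k < (-y).toNat - n)]
      rw [abs_of_nonpos (by omega)]
      omega
  · rintro ⟨z, hz, rfl⟩
    dsimp only
    rcases X_decomp h1k z hz with ⟨j, hj1, hj2, rfl⟩ | ⟨j, hj1, rfl⟩
    · rw [muOf_xval hbij h3 j hj1 hj2]
      have habs := s_abs_bound hbij (k + 1 - j) (by omega) (by omega)
      constructor
      · intro j' hj'1 hj'n
        have h5' := h5 (k + j') (by omega) (by omega)
        have habs' := s_abs_bound hbij (k + j') (by omega) (by omega)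
        intro hcon
        rw [abs_neg, Int.abs_eq_natAbs] at hcon
        have hnn : (s (k + 1 - j)).natAbs = (s (k + j')).natAbs := by omega
        have := hbij.injOn (Set.mem_Icc.mpr (⟨by omega, by omega⟩ :
            1 ≤ k + 1 - j ∧ k + 1 - j ≤ n + k))
          (Set.mem_Icc.mpr ⟨by omega, by omega⟩) hnn
        omega
      · rw [abs_neg, Int.abs_eq_natAbs]
        omega
    · rw [abs_of_nonpos (by omega)]
      constructor
      · intro j' hj'1 hj'n
        have h5' := h5 (k + j') (by omega) (by omega)
        have habs' := s_abs_bound hbij (k + j') (by omega) (by omega)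
        intro hcon
        omega
      · omega

end Surj

end Partition'
open Partition' in
/-- `μ ↦ s(μ)` is a bijection from the set of partitions `μ` with
`μ₁ ≤ k` and `i_{2n}(μ) < ∞` onto the set of integer sequences supported on `[1, n+k]`
whose absolute values are a permutation of `1, …, n+k` and which decrease strictly on the
first `k` entries and on the last `n` entries, the latter being positive. -/
theorem statement6 (n k : ℕ) :
    Set.BijOn (seqOf n k)
      {μ : Partition' | μ.f 1 ≤ k ∧ i2 n μ < ⊤}
      {s : ℕ → ℤ |
        (∀ p : ℕ, p = 0 ∨ n + k < p → s p = 0) ∧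
        Set.BijOn (fun p => (s p).natAbs) (Set.Icc 1 (n + k)) (Set.Icc 1 (n + k)) ∧
        (∀ p q : ℕ, 1 ≤ p → p < q → q ≤ k → s q < s p) ∧
        (∀ p q : ℕ, k + 1 ≤ p → p < q → q ≤ n + k → s q < s p) ∧
        (∀ p : ℕ, k + 1 ≤ p → p ≤ n + k → 0 < s p)} := by
  refine ⟨?_, ?_, ?_⟩
  · -- MapsTo
    rintro μ ⟨h1k, hi2⟩
    obtain ⟨i, hmr⟩ := tau_modrule ((i2_lt_top_iff n μ).mp hi2)
    obtain ⟨hG, hlτ, hX⟩ := forward_lemma hmr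
    exact ⟨fun p hp => seqOf_zero hp, seq_bijOn h1k hG hlτ hX,
      seq_dec1 h1k hG, seq_dec2 hlτ, seq_pos hlτ⟩
  · -- InjOn
    rintro μ ⟨h1k, _⟩ μ' ⟨h1k', _⟩ heq
    exact seqOf_inj h1k h1k' (fun p => congrFun heq p)
  · -- SurjOn
    rintro s ⟨h0, hbij, h3, h4, h5⟩
    refine ⟨muOf n k s hbij h3, ⟨muOf_f1 hbij h3, ?_⟩, ?_⟩
    · exact (i2_lt_top_iff n _).mpr (backward_lemma n _ (muOf_good hbij h3))
    · -- seqOf n k (muOf ...) = s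
      obtain ⟨i, hmr⟩ := tau_modrule (backward_lemma n _ (muOf_good hbij h3))
      obtain ⟨hG', hlτ, hX⟩ := forward_lemma hmr
      have htau : tau n (muOf n k s hbij h3) = tauOf n k s hbij h4 h5 :=
        eq_of_Xset_eq n (hX.trans (tauOf_Xset hbij h3 h4 h5).symm)
      funext p
      rcases Nat.eq_zero_or_pos p with hp0 | hp0
      · rw [seqOf_zero (Or.inl hp0), (h0 p (Or.inl hp0)).symm]
      rcases le_or_gt p k with hpk | hpk
      · rw [seqOf_lo hp0 hpk, muOf_xval hbij h3 (k + 1 - p) (by omega) (by omega)]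
        have he : k + 1 - (k + 1 - p) = p := by omega
        rw [he]
        ring
      rcases le_or_gt p (n + k) with hpnk | hpnk
      · rw [seqOf_hi (by omega) hpnk, htau,
          tauOf_val hbij h4 h5 (p - k) (by omega) (by omega)]
        have he : k + (p - k) = p := by omega
        rw [he]
        have hc : ((p - k : ℕ) : ℤ) = (p : ℤ) - k := by omega
        omega
      · rw [seqOf_zero (Or.inr hpnk), (h0 p (Or.inr hpnk)).symm]
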